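/- For any integer N ≥ 1, the alternating-by-parity sum Σ_{r=0}^{N} C(N,r)·(-1)^(r(r-1)/2) equals 2^(N/2)·(cos(Nπ/4) + sin(Nπ/4)). -/

import Mathlib

open Finset Real

lemma aux_neg_one (r : ℕ) :
    ((-1 : ℝ) ^ (r * (r - 1) / 2)) = ((Complex.I ^ r).re + (Complex.I ^ r).im) := by
  induction r using Nat.strong_induction_on with
  | _ r ih =>
    match r with
    | 0 => norm_num
    | 1 => norm_num
    | 2 => norm_num [pow_succ, Complex.I_sq]
    | 3 => norm_num [pow_succ, Complex.I_sq]
    | (n+4) =>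
      have key : (n+4) * (n+4-1) = n * (n-1) + (8*n + 12) := by
        cases n with
        | zero => norm_num
        | succ m =>
          have e1 : m+1+4-1 = m+4 := by omega
          have e2 : m+1-1 = m := by omega
          rw [e1, e2]; ring
      have hev : n * (n-1) % 2 = 0 := by
        rcases Nat.even_mul_pred_self n with ⟨k, hk⟩
        omega
      have hdiv : (n+4) * (n+4-1) / 2 = n * (n-1) / 2 + (4*n + 6) := by omega
      have hI : Complex.I ^ (n+4) = Complex.I ^ n := by
        rw [pow_add, Complex.I_pow_four, mul_one]
      rw [hdiv, pow_add, hI, ← ih n (by omega)]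
      have : (-1 : ℝ) ^ (4*n+6) = 1 := Even.neg_one_pow ⟨2*n+3, by ring⟩
      rw [this, mul_one]

theorem binomial_alternating_triangular_sum (N : ℕ) (hN : 1 ≤ N) :
    ∑ r ∈ Finset.range (N + 1), (N.choose r : ℝ) * (-1 : ℝ) ^ (r * (r - 1) / 2) =
      (Real.sqrt 2) ^ N * (Real.cos (N * π / 4) + Real.sin (N * π / 4)) := by
  have hsum : ((1 + Complex.I) ^ N) =
      ∑ r ∈ Finset.range (N + 1), (N.choose r : ℂ) * Complex.I ^ r := by
    rw [add_comm, add_pow]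
    refine Finset.sum_congr rfl fun r hr => ?_
    ring
  have h1I : (1 + Complex.I) = (Real.sqrt 2 : ℂ) *
      (Complex.cos (↑(π/4)) + Complex.sin (↑(π/4)) * Complex.I) := by
    rw [← Complex.ofReal_cos, ← Complex.ofReal_sin, Real.cos_pi_div_four, Real.sin_pi_div_four]
    have h2 : (Real.sqrt 2 : ℝ) * (Real.sqrt 2 / 2) = 1 := by
      rw [div_eq_mul_inv, ← mul_assoc, Real.mul_self_sqrt (by norm_num)]
      norm_num
    push_cast
    rw [mul_add]
    rw [← mul_assoc]
    norm_cast
    rw [show (Real.sqrt 2 : ℂ) * (Real.sqrt 2 / 2) = 1 by exact_mod_cast h2]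
    push_cast
    ring
  have hpow : (1 + Complex.I) ^ N = (Real.sqrt 2 : ℂ) ^ N *
      (Complex.cos (↑(N * π / 4)) + Complex.sin (↑(N * π / 4)) * Complex.I) := by
    rw [h1I, mul_pow, Complex.cos_add_sin_mul_I_pow]
    congr 2 <;> push_cast <;> ring
  have hre : ((1 + Complex.I) ^ N).re + ((1 + Complex.I) ^ N).im =
      (Real.sqrt 2) ^ N * (Real.cos (N * π / 4) + Real.sin (N * π / 4)) := by
    rw [hpow, ← Complex.ofReal_cos, ← Complex.ofReal_sin]
    have : ((Real.sqrt 2 : ℂ)) ^ N * ((Real.cos (N * π / 4) : ℝ) + (Real.sin (N * π / 4) : ℝ) * Complex.I)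
        = ((Real.sqrt 2 ^ N * Real.cos (N * π / 4) : ℝ) : ℂ)
          + ((Real.sqrt 2 ^ N * Real.sin (N * π / 4) : ℝ) : ℂ) * Complex.I := by
      push_cast; ring
    rw [this]
    simp only [Complex.add_re, Complex.add_im, Complex.mul_re, Complex.mul_im,
      Complex.I_re, Complex.I_im, Complex.ofReal_re, Complex.ofReal_im]
    ring
  calc ∑ r ∈ Finset.range (N + 1), (N.choose r : ℝ) * (-1 : ℝ) ^ (r * (r - 1) / 2)
      = ∑ r ∈ Finset.range (N + 1),
          ((N.choose r : ℝ) * (Complex.I ^ r).re + (N.choose r : ℝ) * (Complex.I ^ r).im) := by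
        refine Finset.sum_congr rfl fun r hr => ?_
        rw [aux_neg_one]; ring
    _ = ((1 + Complex.I) ^ N).re + ((1 + Complex.I) ^ N).im := by
        rw [hsum, Complex.re_sum, Complex.im_sum, ← Finset.sum_add_distrib]
        refine Finset.sum_congr rfl fun r hr => ?_
        simp [Complex.mul_re, Complex.mul_im]
    _ = _ := hre
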